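/- Let $Y$ be a Polish space with metric $d$, $r \geq 1$, and let $p_1,\ldots,p_N, m_1,\ldots,m_N \in \mathcal{P}_r(Y)$ satisfy $\sum_{i=1}^N p_i = \sum_{i=1}^N m_i$. Suppose $(p_i^k)_{k}$ are sequences in $\mathcal{P}_r(Y)$ with $p_i^k \to p_i$ in the $r$-Wasserstein metric for each $i$. Then there exist sequences $(m_i^k)_k$ in $\mathcal{P}_r(Y)$ such that $\sum_{i=1}^N p_i^k = \sum_{i=1}^N m_i^k$ for each $k$ and $m_i^k \to m_i$ in the $r$-Wasserstein metric for each $i$. -/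

import Mathlib

open MeasureTheory Filter Topology

noncomputable section

/-- A coupling of `μ` and `ν`: a measure on the product with the given marginals. -/
def IsCoupling {X Y : Type*} [MeasurableSpace X] [MeasurableSpace Y]
    (π : Measure (X × Y)) (μ : Measure X) (ν : Measure Y) : Prop :=
  π.map Prod.fst = μ ∧ π.map Prod.snd = ν

/-- `WrPow r p q` is the `r`-th power of the `r`-Wasserstein distance:
`inf { ∫ d(y₁,y₂)^r dπ : π coupling of p, q }`. -/
noncomputable def WrPow {Y : Type*} [MeasurableSpace Y] [PseudoMetricSpace Y]
    (r : ℝ) (p q : Measure Y) : ℝ :=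
  sInf {v | ∃ π : Measure (Y × Y), IsCoupling π p q ∧ v = ∫ z, dist z.1 z.2 ^ r ∂π}

/-- Convergence in the `r`-Wasserstein metric. -/
def TendstoWr {Y : Type*} [MeasurableSpace Y] [PseudoMetricSpace Y]
    (r : ℝ) (pk : ℕ → Measure Y) (p : Measure Y) : Prop :=
  Tendsto (fun k => WrPow r (pk k) p) atTop (nhds 0)

/-- Finite `r`-th moment. -/
def FiniteMomentR {Y : Type*} [MeasurableSpace Y] [PseudoMetricSpace Y]
    (r : ℝ) (p : Measure Y) : Prop :=
  ∃ y0 : Y, Integrable (fun y => dist y y0 ^ r) p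

/-- Membership in `𝒫_r(Y)`: a probability measure with finite `r`-th moment. -/
def MemPr {Y : Type*} [MeasurableSpace Y] [PseudoMetricSpace Y]
    (r : ℝ) (p : Measure Y) : Prop :=
  IsProbabilityMeasure p ∧ FiniteMomentR r p

lemma measure_single_le_sum {X : Type*} [MeasurableSpace X] {ι : Type*}
    (s : Finset ι) (μ : ι → Measure X) {j : ι} (hj : j ∈ s) : μ j ≤ ∑ i ∈ s, μ i := by
  refine Measure.le_iff.mpr fun t ht => ?_
  rw [Measure.finset_sum_apply]
  exact Finset.single_le_sum (f := fun i => μ i t) (fun i _ => zero_le) hj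

lemma measure_sum_le_sum {X : Type*} [MeasurableSpace X] {ι : Type*}
    (s : Finset ι) (μ ν : ι → Measure X) (h : ∀ i ∈ s, μ i ≤ ν i) :
    ∑ i ∈ s, μ i ≤ ∑ i ∈ s, ν i := by
  refine Measure.le_iff.mpr fun t ht => ?_
  rw [Measure.finset_sum_apply, Measure.finset_sum_apply]
  exact Finset.sum_le_sum fun i hi => Measure.le_iff'.mp (h i hi) t

section Helpers

variable {Y : Type*} [MeasurableSpace Y] [PseudoMetricSpace Y] {r : ℝ}

lemma map_finsetSum' {X Z : Type*} [MeasurableSpace X] [MeasurableSpace Z] {ι : Type*}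
    (s : Finset ι) (μ : ι → Measure X) {f : X → Z} (hf : Measurable f) :
    (∑ i ∈ s, μ i).map f = ∑ i ∈ s, (μ i).map f := by
  induction s using Finset.cons_induction with
  | empty => simp
  | cons i s hi ih => rw [Finset.sum_cons, Measure.map_add _ _ hf, ih, Finset.sum_cons]

lemma withDensity_finsetSum {X : Type*} [MeasurableSpace X] {ι : Type*} (μ : Measure X)
    (s : Finset ι) (f : ι → X → ENNReal) (hf : ∀ i, Measurable (f i)) :
    μ.withDensity (fun x => ∑ i ∈ s, f i x) = ∑ i ∈ s, μ.withDensity (f i) := by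
  induction s using Finset.cons_induction with
  | empty => simp
  | cons i s hi ih =>
    simp only [Finset.sum_cons]
    rw [← ih, ← withDensity_add_left (hf i)]
    rfl

lemma withDensity_finsetSum_measure {X : Type*} [MeasurableSpace X] {ι : Type*}
    (s : Finset ι) (μ : ι → Measure X) (f : X → ENNReal) :
    (∑ i ∈ s, μ i).withDensity f = ∑ i ∈ s, (μ i).withDensity f := by
  induction s using Finset.cons_induction with
  | empty => simp
  | cons i s hi ih => rw [Finset.sum_cons, withDensity_add_measure, ih, Finset.sum_cons]

lemma map_snd_withDensity {π : Measure (Y × Y)} {g : Y → ENNReal} (hg : Measurable g) :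
    (π.withDensity (fun z => g z.2)).map Prod.snd = (π.map Prod.snd).withDensity g := by
  ext s hs
  rw [Measure.map_apply measurable_snd hs, withDensity_apply _ (measurable_snd hs),
    withDensity_apply _ hs, setLIntegral_map hs hg measurable_snd]

lemma rpow_tri_ineq (hr : 0 ≤ r) {a b c : ℝ} (ha : 0 ≤ a) (hb : 0 ≤ b) (hc : 0 ≤ c)
    (h : a ≤ b + c) : a ^ r ≤ 2 ^ r * b ^ r + 2 ^ r * c ^ r := by
  have h1 : a ≤ 2 * max b c := by
    refine h.trans ?_
    have := le_max_left b c
    have := le_max_right b c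
    nlinarith
  have hmax : (0:ℝ) ≤ max b c := le_trans hb (le_max_left _ _)
  calc a ^ r ≤ (2 * max b c) ^ r := Real.rpow_le_rpow ha h1 hr
    _ = 2 ^ r * (max b c) ^ r := Real.mul_rpow (by norm_num) hmax
    _ ≤ 2 ^ r * b ^ r + 2 ^ r * c ^ r := by
        rcases max_cases b c with ⟨he, _⟩ | ⟨he, _⟩ <;> rw [he]
        · have : (0:ℝ) ≤ 2 ^ r * c ^ r := by positivity
          linarith
        · have : (0:ℝ) ≤ 2 ^ r * b ^ r := by positivity
          linarith

lemma moment_translate [OpensMeasurableSpace Y] {p : Measure Y} [IsFiniteMeasure p] (hr : 1 ≤ r) {y0 : Y}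
    (h : Integrable (fun y => dist y y0 ^ r) p) (y1 : Y) :
    Integrable (fun y => dist y y1 ^ r) p := by
  have hr0 : (0:ℝ) ≤ r := zero_le_one.trans hr
  refine Integrable.mono' ((h.const_mul (2 ^ r)).add (integrable_const (2 ^ r * dist y0 y1 ^ r)))
    ?_ ?_
  · exact ((continuous_id.dist continuous_const).rpow_const
      (fun x => Or.inr hr0)).aestronglyMeasurable
  · refine Filter.Eventually.of_forall fun y => ?_
    rw [Real.norm_of_nonneg (Real.rpow_nonneg dist_nonneg r)]
    exact rpow_tri_ineq hr0 dist_nonneg dist_nonneg dist_nonneg (dist_triangle y y0 y1)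

lemma coupling_integrable [OpensMeasurableSpace Y] [SecondCountableTopology Y] (hr : 1 ≤ r) {π : Measure (Y × Y)} {p q : Measure Y}
    (hπ : IsCoupling π p q) {y0 : Y}
    (hpI : Integrable (fun y => dist y y0 ^ r) p) (hqI : Integrable (fun y => dist y y0 ^ r) q) :
    Integrable (fun z : Y × Y => dist z.1 z.2 ^ r) π := by
  have hr0 : (0:ℝ) ≤ r := zero_le_one.trans hr
  have h1 : Integrable (fun z : Y × Y => dist z.1 y0 ^ r) π := by
    have := hpI
    rw [← hπ.1] at this
    exact this.comp_measurable measurable_fst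
  have h2 : Integrable (fun z : Y × Y => dist z.2 y0 ^ r) π := by
    have := hqI
    rw [← hπ.2] at this
    exact this.comp_measurable measurable_snd
  refine Integrable.mono' ((h1.const_mul (2 ^ r)).add (h2.const_mul (2 ^ r))) ?_ ?_
  · exact (continuous_dist.rpow_const (fun x => Or.inr hr0)).aestronglyMeasurable
  · refine Filter.Eventually.of_forall fun z => ?_
    rw [Real.norm_of_nonneg (Real.rpow_nonneg dist_nonneg r)]
    have : dist z.1 z.2 ≤ dist z.1 y0 + dist z.2 y0 := dist_triangle_right z.1 z.2 y0
    exact rpow_tri_ineq hr0 dist_nonneg dist_nonneg dist_nonneg this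

lemma WrPow_nonneg (r : ℝ) (p q : Measure Y) : 0 ≤ WrPow r p q := by
  apply Real.sInf_nonneg
  rintro v ⟨π, hπ, rfl⟩
  exact integral_nonneg fun z => Real.rpow_nonneg dist_nonneg r

lemma couplingSet_nonempty (r : ℝ) (p q : Measure Y) [IsProbabilityMeasure p]
    [IsProbabilityMeasure q] :
    {v | ∃ π : Measure (Y × Y), IsCoupling π p q ∧ v = ∫ z, dist z.1 z.2 ^ r ∂π}.Nonempty := by
  refine ⟨_, p.prod q, ⟨?_, ?_⟩, rfl⟩ <;> simp [IsCoupling]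

lemma WrPow_le (r : ℝ) {p q : Measure Y} {π : Measure (Y × Y)} (hπ : IsCoupling π p q) :
    WrPow r p q ≤ ∫ z, dist z.1 z.2 ^ r ∂π := by
  refine csInf_le ⟨0, ?_⟩ ⟨π, hπ, rfl⟩
  rintro v ⟨π', hπ', rfl⟩
  exact integral_nonneg fun z => Real.rpow_nonneg dist_nonneg r

end Helpers

/-- **Approximative sequence lemma** (Lemma 3.3). -/
theorem approximative_sequence {Y : Type*} [MeasurableSpace Y] [MetricSpace Y]
    [PolishSpace Y] [BorelSpace Y]
    (r : ℝ) (hr : 1 ≤ r) (N : ℕ)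
    (p m : Fin N → Measure Y)
    (hp : ∀ i, MemPr r (p i)) (hm : ∀ i, MemPr r (m i))
    (hsum : ∑ i, p i = ∑ i, m i)
    (pk : ℕ → Fin N → Measure Y)
    (hpk : ∀ k i, MemPr r (pk k i))
    (hconv : ∀ i, TendstoWr r (fun k => pk k i) (p i)) :
    ∃ mk : ℕ → Fin N → Measure Y,
      (∀ k i, MemPr r (mk k i)) ∧
      (∀ k, ∑ i, pk k i = ∑ i, mk k i) ∧
      (∀ i, TendstoWr r (fun k => mk k i) (m i)) := by
  classical
  set μtot : Measure Y := ∑ i, m i with hμtot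
  haveI hfin : IsFiniteMeasure μtot := by
    constructor
    rw [hμtot, Measure.finset_sum_apply]
    have h1 : ∀ i : Fin N, m i Set.univ = 1 := fun i => (hm i).1.measure_univ
    simp [h1]
  have hm_le : ∀ j, m j ≤ μtot := by
    intro j
    rw [hμtot]
    exact measure_single_le_sum Finset.univ m (Finset.mem_univ j)
  have hp_le : ∀ i, p i ≤ μtot := by
    intro i
    rw [← hsum]
    exact measure_single_le_sum Finset.univ p (Finset.mem_univ i)
  -- the densities of `m j` w.r.t. the total measure
  set gnn : Fin N → Y → NNReal := fun j y => min ((m j).rnDeriv μtot y).toNNReal 1 with hgnn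
  have hgnn_meas : ∀ j, Measurable (gnn j) := fun j =>
    ((Measure.measurable_rnDeriv _ _).ennreal_toNNReal).min measurable_const
  have hg_meas : ∀ j, Measurable (fun y => (gnn j y : ENNReal)) := fun j =>
    (hgnn_meas j).coe_nnreal_ennreal
  have hg_le1 : ∀ j y, ((gnn j y : ENNReal)) ≤ 1 := by
    intro j y
    exact_mod_cast min_le_right _ _
  have hwd : ∀ j, μtot.withDensity (fun y => (gnn j y : ENNReal)) = m j := by
    intro j
    haveI := (hm j).1
    have hac : m j ≪ μtot := (hm_le j).absolutelyContinuous
    have hae : (fun y => ((gnn j y : ENNReal))) =ᵐ[μtot] (m j).rnDeriv μtot := by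
      filter_upwards [Measure.rnDeriv_le_one_of_le (hm_le j)] with y hy
      have hy1 : (m j).rnDeriv μtot y ≤ 1 := by simpa using hy
      have hne : (m j).rnDeriv μtot y ≠ ⊤ := ne_top_of_le_ne_top ENNReal.one_ne_top hy1
      simp only [hgnn]
      rw [ENNReal.coe_min, ENNReal.coe_toNNReal hne, ENNReal.coe_one, min_eq_left hy1]
    rw [withDensity_congr_ae hae, Measure.withDensity_rnDeriv_eq _ _ hac]
  have hsum_g : ∀ᵐ y ∂μtot, ∑ j, ((gnn j y : ENNReal)) = 1 := by
    have hmeasS : Measurable (fun y => ∑ j, ((gnn j y : ENNReal))) :=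
      Finset.measurable_sum _ fun j _ => hg_meas j
    have heq : μtot.withDensity (fun y => ∑ j, ((gnn j y : ENNReal))) = μtot.withDensity 1 := by
      rw [MeasureTheory.withDensity_one,
        withDensity_finsetSum μtot Finset.univ (fun j y => ((gnn j y : ENNReal)))
          (fun j => hg_meas j)]
      simp_rw [hwd]
      exact hμtot.symm
    have h2 := (withDensity_eq_iff_of_sigmaFinite hmeasS.aemeasurable
      measurable_one.aemeasurable).mp heq
    filter_upwards [h2] with y hy
    simpa using hy
  -- choose near-optimal couplings
  have hsel : ∀ k (i : Fin N), ∃ π : Measure (Y × Y), IsCoupling π (pk k i) (p i) ∧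
      ∫ z, dist z.1 z.2 ^ r ∂π < WrPow r (pk k i) (p i) + 1 / ((k : ℝ) + 1) := by
    intro k i
    haveI := (hpk k i).1
    haveI := (hp i).1
    obtain ⟨v, ⟨π, hπ, rfl⟩, hlt⟩ :=
      Real.lt_sInf_add_pos (couplingSet_nonempty r (pk k i) (p i))
        (by positivity : (0:ℝ) < 1 / ((k : ℝ) + 1))
    exact ⟨π, hπ, hlt⟩
  choose π hπc hπlt using hsel
  set T : ℕ → Fin N → Fin N → Measure (Y × Y) :=
    fun k j i => (π k i).withDensity (fun z => (gnn j z.2 : ENNReal)) with hT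
  set Pi2 : ℕ → Fin N → Measure (Y × Y) := fun k j => ∑ i, T k j i with hPi2
  set mk : ℕ → Fin N → Measure Y := fun k j => ∑ i, (T k j i).map Prod.fst with hmk
  have hgsnd_meas : ∀ j, Measurable (fun z : Y × Y => (gnn j z.2 : ENNReal)) :=
    fun j => (hg_meas j).comp measurable_snd
  have hPfst : ∀ k j, (Pi2 k j).map Prod.fst = mk k j := by
    intro k j
    simp only [hPi2, hmk]
    exact map_finsetSum' _ _ measurable_fst
  have hT_le : ∀ k j i, T k j i ≤ π k i := by
    intro k j i
    simp only [hT]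
    refine le_trans (withDensity_mono (Filter.Eventually.of_forall fun z => hg_le1 j z.2)) ?_
    exact MeasureTheory.withDensity_one.le
  have hT_snd : ∀ k j i,
      (T k j i).map Prod.snd = (p i).withDensity (fun y => (gnn j y : ENNReal)) := by
    intro k j i
    simp only [hT]
    rw [map_snd_withDensity (hg_meas j), (hπc k i).2]
  have hPsnd : ∀ k j, (Pi2 k j).map Prod.snd = m j := by
    intro k j
    simp only [hPi2]
    rw [map_finsetSum' _ _ measurable_snd]
    simp_rw [hT_snd k j]
    rw [← withDensity_finsetSum_measure, hsum, hwd j]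
  have hA : ∀ k, ∑ i, pk k i = ∑ i, mk k i := by
    intro k
    have hkey : ∀ i : Fin N, ∑ j, (T k j i).map Prod.fst = pk k i := by
      intro i
      have hac : p i ≪ μtot := (hp_le i).absolutelyContinuous
      have hpae : ∀ᵐ y ∂(p i), ∑ j, ((gnn j y : ENNReal)) = 1 := hac.ae_le hsum_g
      have hmeasset : MeasurableSet {y : Y | ∑ j, ((gnn j y : ENNReal)) = 1} :=
        (Finset.measurable_sum Finset.univ fun j _ => hg_meas j) (measurableSet_singleton 1)
      have hπae : ∀ᵐ z ∂(π k i), ∑ j, ((gnn j z.2 : ENNReal)) = 1 := by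
        have hmap : ∀ᵐ y ∂((π k i).map Prod.snd), ∑ j, ((gnn j y : ENNReal)) = 1 := by
          rw [(hπc k i).2]; exact hpae
        exact (MeasureTheory.ae_map_iff measurable_snd.aemeasurable hmeasset).mp hmap
      have hae1 : (fun z : Y × Y => ∑ j, ((gnn j z.2 : ENNReal))) =ᵐ[π k i]
          (1 : Y × Y → ENNReal) := by
        filter_upwards [hπae] with z hz
        simpa using hz
      calc ∑ j, (T k j i).map Prod.fst
          = ((π k i).withDensity (fun z => ∑ j, ((gnn j z.2 : ENNReal)))).map Prod.fst := by
            rw [withDensity_finsetSum (π k i) Finset.univ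
              (fun j z => ((gnn j z.2 : ENNReal))) (fun j => hgsnd_meas j),
              map_finsetSum' _ _ measurable_fst]
        _ = ((π k i).withDensity 1).map Prod.fst := by rw [withDensity_congr_ae hae1]
        _ = pk k i := by rw [MeasureTheory.withDensity_one, (hπc k i).1]
    calc ∑ i, pk k i = ∑ i, ∑ j, (T k j i).map Prod.fst :=
          Finset.sum_congr rfl fun i _ => (hkey i).symm
      _ = ∑ j, ∑ i, (T k j i).map Prod.fst := Finset.sum_comm
      _ = ∑ j, mk k j := by simp only [hmk]
  have hprob : ∀ k j, IsProbabilityMeasure (mk k j) := by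
    intro k j
    haveI := (hm j).1
    constructor
    have h1 : mk k j Set.univ = Pi2 k j Set.univ := by
      rw [← hPfst k j, Measure.map_apply measurable_fst MeasurableSet.univ, Set.preimage_univ]
    have h2 : m j Set.univ = Pi2 k j Set.univ := by
      rw [← hPsnd k j, Measure.map_apply measurable_snd MeasurableSet.univ, Set.preimage_univ]
    rw [h1, ← h2, measure_univ]
  have hmom : ∀ k j, FiniteMomentR r (mk k j) := by
    intro k j
    obtain ⟨y0, _hy0⟩ := (hm j).2
    refine ⟨y0, ?_⟩
    have hle : mk k j ≤ ∑ i, pk k i := by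
      simp only [hmk]
      refine measure_sum_le_sum _ _ _ fun i _ => ?_
      refine le_trans (Measure.map_mono (hT_le k j i) measurable_fst) ?_
      rw [(hπc k i).1]
    have hint : Integrable (fun y => dist y y0 ^ r) (∑ i, pk k i) := by
      refine integrable_finset_sum_measure.mpr fun i _ => ?_
      haveI := (hpk k i).1
      obtain ⟨y1, hy1⟩ := (hpk k i).2
      exact moment_translate hr hy1 y0
    exact hint.mono_measure hle
  have hintπ : ∀ k (i : Fin N), Integrable (fun z : Y × Y => dist z.1 z.2 ^ r) (π k i) := by
    intro k i
    haveI := (hpk k i).1; haveI := (hp i).1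
    obtain ⟨y1, hy1⟩ := (hpk k i).2
    obtain ⟨y2, hy2⟩ := (hp i).2
    exact coupling_integrable hr (hπc k i) hy1 (moment_translate hr hy2 y1)
  have hDbound : ∀ j k, WrPow r (mk k j) (m j) ≤
      ∑ i : Fin N, (WrPow r (pk k i) (p i) + 1 / ((k:ℝ)+1)) := by
    intro j k
    have hcoup : IsCoupling (Pi2 k j) (mk k j) (m j) := ⟨hPfst k j, hPsnd k j⟩
    refine le_trans (WrPow_le r hcoup) ?_
    have hintT : ∀ i : Fin N, Integrable (fun z : Y × Y => dist z.1 z.2 ^ r) (T k j i) :=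
      fun i => (hintπ k i).mono_measure (hT_le k j i)
    simp only [hPi2]
    rw [integral_finset_sum_measure fun i _ => hintT i]
    refine Finset.sum_le_sum fun i _ => ?_
    refine le_trans ?_ (hπlt k i).le
    exact integral_mono_measure (hT_le k j i)
      (Filter.Eventually.of_forall fun z => Real.rpow_nonneg dist_nonneg r) (hintπ k i)
  refine ⟨mk, fun k j => ⟨hprob k j, hmom k j⟩, hA, ?_⟩
  intro j
  have hg0 : Tendsto (fun k : ℕ => ∑ i : Fin N, (WrPow r (pk k i) (p i) + 1 / ((k:ℝ)+1)))
      atTop (nhds 0) := by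
    have h := tendsto_finset_sum (Finset.univ : Finset (Fin N))
      (fun i _ => Filter.Tendsto.add (hconv i) tendsto_one_div_add_atTop_nhds_zero_nat)
    simpa using h
  exact squeeze_zero (fun k => WrPow_nonneg r _ _) (fun k => hDbound j k) hg0
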